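/- Define f : (0,∞) → ℝ by f(u) = (2(1 − e^{−u}) − 1) / (2(1 − e^{−u} − u e^{−u})). Then there exists a unique u* ∈ (1, 2) satisfying u* = 2 − 2e^{−u*}; moreover f(u) ≤ f(u*) = 1/u* for all u ∈ (0,∞), with equality if and only if u = u*. -/

import Mathlib

private lemma xl_exp_neg_lt_half {u : ℝ} (hu : 1 ≤ u) : Real.exp (-u) < 1/2 := by
  have h2 : (2:ℝ) < Real.exp 1 := by
    have := Real.exp_one_gt_d9; linarith
  have h3 : Real.exp (-u) ≤ Real.exp (-1) := Real.exp_le_exp.mpr (by linarith)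
  have h1 : Real.exp (-1) * Real.exp 1 = 1 := by
    rw [← Real.exp_add]; simp
  nlinarith [Real.exp_pos (-1 : ℝ)]

private lemma xl_D_pos {u : ℝ} (hu : 0 < u) :
    0 < 2 * (1 - Real.exp (-u) - u * Real.exp (-u)) := by
  have h1 : u + 1 < Real.exp u := Real.add_one_lt_exp (ne_of_gt hu)
  have h2 : Real.exp (-u) * Real.exp u = 1 := by rw [← Real.exp_add]; simp
  nlinarith [Real.exp_pos (-u), mul_lt_mul_of_pos_left h1 (Real.exp_pos (-u))]

private lemma xl_hasDerivAt_h (s u : ℝ) :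
    HasDerivAt (fun u => 2 - 2*Real.exp (-u) - 2*u*Real.exp (-u) - s*(1 - 2*Real.exp (-u)))
      (2 * Real.exp (-u) * (u - s)) u := by
  have e : HasDerivAt (fun u : ℝ => Real.exp (-u)) (-Real.exp (-u)) u := by
    simpa [Function.comp_def] using (Real.hasDerivAt_exp (-u)).comp u (hasDerivAt_neg u)
  have t1 : HasDerivAt (fun u : ℝ => 2 * Real.exp (-u)) (2 * -Real.exp (-u)) u := e.const_mul 2
  have t2 : HasDerivAt (fun u : ℝ => 2*u * Real.exp (-u))
      ((2*1) * Real.exp (-u) + 2*u * -Real.exp (-u)) u :=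
    ((hasDerivAt_id u).const_mul 2).mul e
  have t3 : HasDerivAt (fun u : ℝ => s * (1 - 2*Real.exp (-u))) (s * (0 - 2 * -Real.exp (-u))) u :=
    ((hasDerivAt_const u 1).sub t1).const_mul s
  have := (((hasDerivAt_const u (2:ℝ)).sub t1).sub t2).sub t3
  exact this.congr_deriv (by ring)

private lemma xl_h_min {s : ℝ} (hs : 0 < s) {u : ℝ} (hu : 0 < u) (hne : u ≠ s) :
    2 - 2*Real.exp (-s) - 2*s*Real.exp (-s) - s*(1 - 2*Real.exp (-s)) <
    2 - 2*Real.exp (-u) - 2*u*Real.exp (-u) - s*(1 - 2*Real.exp (-u)) := by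
  set h : ℝ → ℝ := fun u => 2 - 2*Real.exp (-u) - 2*u*Real.exp (-u) - s*(1 - 2*Real.exp (-u))
    with hh
  have hcont : Continuous h := by fun_prop
  have hderiv : ∀ x : ℝ, deriv h x = 2 * Real.exp (-x) * (x - s) :=
    fun x => (xl_hasDerivAt_h s x).deriv
  rcases lt_or_gt_of_ne hne with hlt | hgt
  · have hanti : StrictAntiOn h (Set.Icc 0 s) := by
      apply strictAntiOn_of_deriv_neg (convex_Icc 0 s) hcont.continuousOn
      intro x hx
      rw [interior_Icc] at hx
      rw [hderiv]
      have := Real.exp_pos (-x)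
      nlinarith [hx.2]
    exact hanti ⟨le_of_lt hu, le_of_lt hlt⟩ ⟨le_of_lt hs, le_refl s⟩ hlt
  · have hmono : StrictMonoOn h (Set.Ici s) := by
      apply strictMonoOn_of_deriv_pos (convex_Ici s) hcont.continuousOn
      intro x hx
      rw [interior_Ici] at hx
      rw [hderiv]
      have := Real.exp_pos (-x)
      nlinarith [Set.mem_Ioi.mp hx]
    exact hmono (Set.mem_Ici.mpr le_rfl) (Set.mem_Ici.mpr (le_of_lt hgt)) hgt

private lemma xl_g_strictMono :
    StrictMonoOn (fun u : ℝ => u - 2 + 2*Real.exp (-u)) (Set.Icc 1 2) := by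
  apply strictMonoOn_of_deriv_pos (convex_Icc 1 2)
  · fun_prop
  · intro x hx
    rw [interior_Icc] at hx
    have hd : HasDerivAt (fun u : ℝ => u - 2 + 2*Real.exp (-u)) (1 - 2*Real.exp (-x)) x := by
      have e : HasDerivAt (fun u : ℝ => Real.exp (-u)) (-Real.exp (-x)) x := by
        simpa [Function.comp_def] using (Real.hasDerivAt_exp (-x)).comp x (hasDerivAt_neg x)
      have := ((hasDerivAt_id x).sub_const 2).add (e.const_mul 2)
      exact this.congr_deriv (by ring)
    rw [hd.deriv]
    have := xl_exp_neg_lt_half (le_of_lt hx.1)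
    linarith

/-- The excess-of-loss reinsurance optimization with exponential claims (`λ = 1`,
`θ = 2`, `η = 1`): the unique fixed point `u* ∈ (1,2)` of `u = 2 - 2e^{-u}` is the
unique maximizer of `f(u) = (2(1 - e^{-u}) - 1)/(2(1 - e^{-u} - u e^{-u}))` on `(0,∞)`,
with maximal value `1/u*`. -/
theorem xl_reinsurance_optimal
    (f : ℝ → ℝ)
    (hf : ∀ u > (0:ℝ), f u =
      (2 * (1 - Real.exp (-u)) - 1) / (2 * (1 - Real.exp (-u) - u * Real.exp (-u)))) :
    ∃ ustar : ℝ, ustar ∈ Set.Ioo (1:ℝ) 2 ∧ ustar = 2 - 2 * Real.exp (-ustar) ∧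
      (∀ v ∈ Set.Ioo (1:ℝ) 2, v = 2 - 2 * Real.exp (-v) → v = ustar) ∧
      f ustar = 1 / ustar ∧
      ∀ u > (0:ℝ), f u ≤ f ustar ∧ (f u = f ustar ↔ u = ustar) := by
  -- existence of the fixed point by the intermediate value theorem
  set g : ℝ → ℝ := fun u => u - 2 + 2*Real.exp (-u) with hg
  have hgc : ContinuousOn g (Set.Icc 1 2) := by fun_prop
  have hg1 : g 1 < 0 := by
    have := xl_exp_neg_lt_half (le_refl (1:ℝ))
    simp only [hg]; linarith
  have hg2 : 0 < g 2 := by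
    have := Real.exp_pos (-2 : ℝ)
    simp only [hg]; linarith
  have hIVT := intermediate_value_Ioo (by norm_num : (1:ℝ) ≤ 2) hgc
  obtain ⟨s, hsmem, hgs⟩ := hIVT ⟨hg1, hg2⟩
  have hs1 : 1 < s := hsmem.1
  have hs2 : s < 2 := hsmem.2
  have hs0 : 0 < s := by linarith
  have es : Real.exp (-s) = 1 - s/2 := by
    have : s - 2 + 2*Real.exp (-s) = 0 := hgs
    linarith
  have hfix : s = 2 - 2 * Real.exp (-s) := by rw [es]; ring
  -- value at the optimum
  have key1 : (2 * (1 - Real.exp (-s)) - 1) = s - 1 := by rw [es]; ring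
  have key2 : (2 * (1 - Real.exp (-s) - s * Real.exp (-s))) = s*(s-1) := by rw [es]; ring
  have hfs : f s = 1 / s := by
    rw [hf s hs0, key1, key2,
      div_eq_div_iff (by nlinarith : s*(s-1) ≠ 0) (by linarith : s ≠ 0)]
    ring
  -- the value of h at s is 0
  have h0 : 2 - 2*Real.exp (-s) - 2*s*Real.exp (-s) - s*(1 - 2*Real.exp (-s)) = 0 := by
    rw [es]; ring
  refine ⟨s, hsmem, hfix, ?_, hfs, ?_⟩
  · -- uniqueness of the fixed point
    intro v hv hvfix
    have hgv : g v = 0 := by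
      simp only [hg]; linarith [hvfix]
    have hgs0 : g s = 0 := hgs
    have hinj := xl_g_strictMono.injOn
    exact hinj (Set.Ioo_subset_Icc_self hv) (Set.Ioo_subset_Icc_self hsmem)
      (show g v = g s by rw [hgv, hgs0])
  · intro u hu
    by_cases hne : u = s
    · subst hne
      exact ⟨le_refl _, by simp⟩
    · have hmin := xl_h_min hs0 hu hne
      rw [h0] at hmin
      have hlt : f u < f s := by
        rw [hf u hu, hfs, div_lt_div_iff₀ (xl_D_pos hu) hs0]
        nlinarith [hmin]
      refine ⟨le_of_lt hlt, ?_, fun heq => absurd heq hne⟩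
      intro heq; exact absurd heq (ne_of_lt hlt)
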